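/- Let V be a 5-dimensional real vector space with symmetric bilinear form g of signature (-,+,+,+,+) and semi-null pentad {l,m,x,y,z}. Define T corresponding to the Segre {zz̄111} canonical form: T l = ρ₁ l − ρ₂ m (with ρ₂ ≠ 0), T m = ρ₂ l + ρ₁ m, T x = ρ₃ x, T y = ρ₄ y, T z = ρ₅ z. Then T is g-self-adjoint, has exactly three real eigenvalues ρ₃, ρ₄, ρ₅ with spacelike eigenvectors, and has no real timelike or null eigenvector. -/
import Mathlib


open Module

theorem stmt_14 {V : Type*} [AddCommGroup V] [Module ℝ V] [FiniteDimensional ℝ V]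
    (hdim : finrank ℝ V = 5)
    (g : LinearMap.BilinForm ℝ V)
    (hsymm : ∀ u v : V, g u v = g v u)
    (b : Basis (Fin 5) ℝ V)
    (l m x y z : V)
    (hb : b 0 = l ∧ b 1 = m ∧ b 2 = x ∧ b 3 = y ∧ b 4 = z)
    (hll : g l l = 0) (hmm : g m m = 0) (hlm : g l m = 1)
    (hxx : g x x = 1) (hyy : g y y = 1) (hzz : g z z = 1)
    (hlx : g l x = 0) (hly : g l y = 0) (hlz : g l z = 0)
    (hmx : g m x = 0) (hmy : g m y = 0) (hmz : g m z = 0)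
    (hxy : g x y = 0) (hxz : g x z = 0) (hyz : g y z = 0)
    (ρ₁ ρ₂ ρ₃ ρ₄ ρ₅ : ℝ) (hρ₂ : ρ₂ ≠ 0)
    (T : V →ₗ[ℝ] V)
    (hTl : T l = ρ₁ • l - ρ₂ • m) (hTm : T m = ρ₂ • l + ρ₁ • m)
    (hTx : T x = ρ₃ • x) (hTy : T y = ρ₄ • y) (hTz : T z = ρ₅ • z) :
    (∀ u v : V, g (T u) v = g u (T v)) ∧
    (∀ μ : ℝ, (∃ v : V, v ≠ 0 ∧ T v = μ • v) ↔ (μ = ρ₃ ∨ μ = ρ₄ ∨ μ = ρ₅)) ∧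
    (∀ (v : V) (μ : ℝ), v ≠ 0 → T v = μ • v → 0 < g v v) := by
  obtain ⟨hb0, hb1, hb2, hb3, hb4⟩ := hb
  have hml : g m l = 1 := by rw [hsymm]; exact hlm
  have hxl : g x l = 0 := by rw [hsymm]; exact hlx
  have hyl : g y l = 0 := by rw [hsymm]; exact hly
  have hzl : g z l = 0 := by rw [hsymm]; exact hlz
  have hxm : g x m = 0 := by rw [hsymm]; exact hmx
  have hym : g y m = 0 := by rw [hsymm]; exact hmy
  have hzm : g z m = 0 := by rw [hsymm]; exact hmz
  have hyx : g y x = 0 := by rw [hsymm]; exact hxy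
  have hzx : g z x = 0 := by rw [hsymm]; exact hxz
  have hzy : g z y = 0 := by rw [hsymm]; exact hyz
  -- key: coordinates of eigenvectors
  have key : ∀ (v : V) (μ : ℝ), T v = μ • v →
      b.repr v 0 = 0 ∧ b.repr v 1 = 0 ∧ (ρ₃ - μ) * b.repr v 2 = 0 ∧
      (ρ₄ - μ) * b.repr v 3 = 0 ∧ (ρ₅ - μ) * b.repr v 4 = 0 := by
    intro v μ hv
    have hvrep : b.repr v 0 • b 0 + b.repr v 1 • b 1 + b.repr v 2 • b 2
        + b.repr v 3 • b 3 + b.repr v 4 • b 4 = v := by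
      have h := b.sum_repr v
      rwa [Fin.sum_univ_five] at h
    have hTv : T v = (ρ₁ * b.repr v 0 + ρ₂ * b.repr v 1) • b 0
        + (-(ρ₂ * b.repr v 0) + ρ₁ * b.repr v 1) • b 1 +
        (ρ₃ * b.repr v 2) • b 2 + (ρ₄ * b.repr v 3) • b 3 + (ρ₅ * b.repr v 4) • b 4 := by
      conv_lhs => rw [← hvrep]
      rw [hb0, hb1, hb2, hb3, hb4]
      simp only [map_add, map_smul, hTl, hTm, hTx, hTy, hTz]
      module
    rw [hTv] at hv
    have h0 := congrArg (fun w => b.repr w 0) hv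
    have h1 := congrArg (fun w => b.repr w 1) hv
    have h2 := congrArg (fun w => b.repr w 2) hv
    have h3 := congrArg (fun w => b.repr w 3) hv
    have h4 := congrArg (fun w => b.repr w 4) hv
    simp only [map_add, map_smul, Finsupp.add_apply, Finsupp.smul_apply, Basis.repr_self,
      Finsupp.single_apply, smul_eq_mul] at h0 h1 h2 h3 h4
    simp (config := { decide := true }) at h0 h1 h2 h3 h4
    have hab : ρ₂ * ((b.repr v 0)^2 + (b.repr v 1)^2) = 0 := by
      linear_combination (b.repr v 1) * h0 - (b.repr v 0) * h1
    have hab2 : (b.repr v 0)^2 + (b.repr v 1)^2 = 0 := by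
      rcases mul_eq_zero.mp hab with h | h
      · exact absurd h hρ₂
      · exact h
    have hs0 := sq_nonneg (b.repr v 0)
    have hs1 := sq_nonneg (b.repr v 1)
    have ha0 : b.repr v 0 = 0 := pow_eq_zero_iff two_ne_zero |>.mp (by linarith)
    have hb0' : b.repr v 1 = 0 := pow_eq_zero_iff two_ne_zero |>.mp (by linarith)
    exact ⟨ha0, hb0', by rcases h2 with h | h <;> simp [h],
      by rcases h3 with h | h <;> simp [h], by rcases h4 with h | h <;> simp [h]⟩
  refine ⟨?_, ?_, ?_⟩
  · -- self-adjoint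
    have hmaps : g ∘ₗ T = g.compl₂ T := by
      refine b.ext fun i => b.ext fun j => ?_
      fin_cases i <;> fin_cases j <;>
        simp [hb0, hb1, hb2, hb3, hb4, hTl, hTm, hTx, hTy, hTz,
          map_add, map_sub, map_smul, LinearMap.sub_apply, LinearMap.add_apply,
          LinearMap.smul_apply, smul_eq_mul,
          hll, hmm, hlm, hml, hxx, hyy, hzz, hlx, hly, hlz, hmx, hmy, hmz,
          hxy, hxz, hyz, hxl, hyl, hzl, hxm, hym, hzm, hyx, hzx, hzy] <;> ring
    intro u v
    exact DFunLike.congr_fun (DFunLike.congr_fun hmaps u) v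
  · -- eigenvalues
    intro μ
    constructor
    · rintro ⟨v, hv0, hveq⟩
      by_contra hcon
      push_neg at hcon
      obtain ⟨hμ3, hμ4, hμ5⟩ := hcon
      obtain ⟨ha, hbb, h2, h3, h4⟩ := key v μ hveq
      have hc : b.repr v 2 = 0 :=
        (mul_eq_zero.mp h2).resolve_left (sub_ne_zero.mpr (fun h => hμ3 h.symm))
      have hd : b.repr v 3 = 0 :=
        (mul_eq_zero.mp h3).resolve_left (sub_ne_zero.mpr (fun h => hμ4 h.symm))
      have he : b.repr v 4 = 0 :=
        (mul_eq_zero.mp h4).resolve_left (sub_ne_zero.mpr (fun h => hμ5 h.symm))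
      apply hv0
      have h := (b.sum_repr v)
      rw [Fin.sum_univ_five, ha, hbb, hc, hd, he] at h
      simpa using h.symm
    · rintro (rfl | rfl | rfl)
      · exact ⟨x, by rw [← hb2]; exact b.ne_zero 2, hTx⟩
      · exact ⟨y, by rw [← hb3]; exact b.ne_zero 3, hTy⟩
      · exact ⟨z, by rw [← hb4]; exact b.ne_zero 4, hTz⟩
  · -- spacelike
    intro v μ hv0 hveq
    obtain ⟨ha, hbb, -, -, -⟩ := key v μ hveq
    set c := b.repr v 2 with hcdef
    set d := b.repr v 3 with hddef
    set e := b.repr v 4 with hedef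
    have hvrep : c • x + d • y + e • z = v := by
      have h := b.sum_repr v
      rw [Fin.sum_univ_five, ha, hbb, hb2, hb3, hb4] at h
      simpa using h
    have hgvv : g v v = c^2 + d^2 + e^2 := by
      rw [← hvrep]
      simp only [map_add, map_smul, LinearMap.add_apply, LinearMap.smul_apply, smul_eq_mul,
        hxx, hyy, hzz, hxy, hxz, hyz, hyx, hzx, hzy]
      ring
    have hne : c ≠ 0 ∨ d ≠ 0 ∨ e ≠ 0 := by
      by_contra h
      push_neg at h
      obtain ⟨h1, h2, h3⟩ := h
      apply hv0
      rw [← hvrep, h1, h2, h3]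
      simp
    rw [hgvv]
    rcases hne with h | h | h <;> positivity
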